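/- Assume C has enough C-projectives. Then F(C) is covariantly finite in the category H(C) of arrows between objects of C: for every Λ-linear map f : X → Y with X, Y ∈ C, there exist a C-projective object P ∈ C and a deflation p : P → Y of C such that the map (f,p) : X ⊕ P → Y (with components f and p) lies in F(C), and the arrow morphism ((1,0)ᵗ, 𝟙_Y) : f → (f,p) is a left F(C)-approximation of f: for every h : M → N in F(C) and every arrow morphism (α, β) : f → h, there exists γ : X ⊕ P → M with h ∘ γ = β ∘ (f,p) and γ ∘ (1,0)ᵗ = α. -/

import Mathlib

open CategoryTheory CategoryTheory.Limits

universe u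

section Defs
variable {Λ : Type u} [Ring Λ]

/-- A short exact sequence `0 → X → Y → Z → 0` of Λ-modules. -/
def ShortExactSeq {X Y Z : ModuleCat.{u} Λ} (f : X ⟶ Y) (g : Y ⟶ Z) : Prop :=
  Function.Injective f ∧ Function.Surjective g ∧ Function.Exact f g

variable (C : Set (ModuleCat.{u} Λ))

/-- An inflation of the exact category `C`: an injective map between objects of `C`
whose cokernel lies in `C`. -/
def IsInflation {X Y : ModuleCat.{u} Λ} (f : X ⟶ Y) : Prop :=
  X ∈ C ∧ Y ∈ C ∧ Function.Injective f ∧ ∃ Z ∈ C, ∃ g : Y ⟶ Z, ShortExactSeq f g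

/-- A deflation of the exact category `C`: a surjective map between objects of `C`
whose kernel lies in `C`. -/
def IsDeflation {X Y : ModuleCat.{u} Λ} (f : X ⟶ Y) : Prop :=
  X ∈ C ∧ Y ∈ C ∧ Function.Surjective f ∧ ∃ Z ∈ C, ∃ g : Z ⟶ X, ShortExactSeq g f

/-- The monomorphism category `S(C)`, as a subcategory of the arrow category. -/
def SMono : Set (Arrow (ModuleCat.{u} Λ)) := {a | IsInflation C a.hom}

/-- The epimorphism category `F(C)`, as a subcategory of the arrow category. -/
def FEpi : Set (Arrow (ModuleCat.{u} Λ)) := {a | IsDeflation C a.hom}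

/-- `I` is a `C`-injective object. -/
def CInjective (I : ModuleCat.{u} Λ) : Prop :=
  I ∈ C ∧ ∀ (U V : ModuleCat.{u} Λ), U ∈ C → V ∈ C →
    ∀ (f : I ⟶ U) (g : U ⟶ V), ShortExactSeq f g → ∃ r : U ⟶ I, f ≫ r = 𝟙 I

/-- `P` is a `C`-projective object. -/
def CProjective (P : ModuleCat.{u} Λ) : Prop :=
  P ∈ C ∧ ∀ (U V : ModuleCat.{u} Λ), U ∈ C → V ∈ C →
    ∀ (f : U ⟶ V) (g : V ⟶ P), ShortExactSeq f g → ∃ s : P ⟶ V, s ≫ g = 𝟙 P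

/-- `C` has enough `C`-injectives. -/
def EnoughCInjectives : Prop :=
  ∀ X ∈ C, ∃ (I X' : ModuleCat.{u} Λ), CInjective C I ∧ X' ∈ C ∧
    ∃ (e : X ⟶ I) (q : I ⟶ X'), ShortExactSeq e q

/-- `C` has enough `C`-projectives. -/
def EnoughCProjectives : Prop :=
  ∀ X ∈ C, ∃ (P X' : ModuleCat.{u} Λ), CProjective C P ∧ X' ∈ C ∧
    ∃ (q : X' ⟶ P) (p : P ⟶ X), ShortExactSeq q p

def ClosedUnderIso : Prop := ∀ (M N : ModuleCat.{u} Λ), (M ≅ N) → M ∈ C → N ∈ C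
def ContainsZero : Prop := ∀ M : ModuleCat.{u} Λ, Subsingleton M → M ∈ C
def ClosedUnderSums : Prop := ∀ M N : ModuleCat.{u} Λ, M ∈ C → N ∈ C → (M ⊞ N) ∈ C
def ClosedUnderExtensions : Prop :=
  ∀ (X Y Z : ModuleCat.{u} Λ) (f : X ⟶ Y) (g : Y ⟶ Z),
    X ∈ C → Z ∈ C → ShortExactSeq f g → Y ∈ C

end Defs

section Approx
variable {A : Type*} [Category A] (D : Set A)

/-- `g : Y ⟶ Z` is a right `D`-approximation of `Z`. -/
def IsRightApprox {Y Z : A} (g : Y ⟶ Z) : Prop :=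
  Y ∈ D ∧ ∀ W ∈ D, ∀ u : W ⟶ Z, ∃ v : W ⟶ Y, v ≫ g = u

/-- `g : Z ⟶ Y` is a left `D`-approximation of `Z`. -/
def IsLeftApprox {Z Y : A} (g : Z ⟶ Y) : Prop :=
  Y ∈ D ∧ ∀ W ∈ D, ∀ u : Z ⟶ W, ∃ v : Y ⟶ W, g ≫ v = u

end Approx

section Finiteness
variable {Λ : Type u} [Ring Λ]

/-- Contravariant finiteness of `C` in `mod Λ` (the finite-dimensional Λ-modules). -/
def ContravariantlyFinite (C : Set (ModuleCat.{u} Λ)) : Prop :=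
  ∀ M : ModuleCat.{u} Λ, Module.Finite Λ M →
    ∃ (Y : ModuleCat.{u} Λ) (g : Y ⟶ M), IsRightApprox C g

/-- Covariant finiteness of `C` in `mod Λ`. -/
def CovariantlyFinite (C : Set (ModuleCat.{u} Λ)) : Prop :=
  ∀ M : ModuleCat.{u} Λ, Module.Finite Λ M →
    ∃ (Y : ModuleCat.{u} Λ) (g : M ⟶ Y), IsLeftApprox C g

end Finiteness

section Helpers

private lemma hom_congr' {Λ : Type u} [Ring Λ] {A B : ModuleCat.{u} Λ} {u v : A ⟶ B}
    (h : u = v) (x : A) : u x = v x := by rw [h]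

private lemma biprod_desc_apply' {Λ : Type u} [Ring Λ] {X P Y : ModuleCat.{u} Λ}
    (f : X ⟶ Y) (p : P ⟶ Y) (b : ↥(X ⊞ P)) :
    biprod.desc f p b = f ((biprod.fst : X ⊞ P ⟶ X) b) + p ((biprod.snd : X ⊞ P ⟶ P) b) := by
  have h2 : biprod.desc f p b
      = biprod.desc f p (((biprod.fst ≫ biprod.inl + biprod.snd ≫ biprod.inr :
          X ⊞ P ⟶ X ⊞ P)) b) := by
    rw [biprod.total]; rfl
  have e1 : ∀ x : X, biprod.desc f p ((biprod.inl : X ⟶ X ⊞ P) x) = f x := fun x =>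
    hom_congr' (biprod.inl_desc f p) x
  have e2 : ∀ x : P, biprod.desc f p ((biprod.inr : P ⟶ X ⊞ P) x) = p x := fun x =>
    hom_congr' (biprod.inr_desc f p) x
  rw [h2]
  show biprod.desc f p ((biprod.inl : X ⟶ X ⊞ P) ((biprod.fst : X ⊞ P ⟶ X) b)
      + (biprod.inr : P ⟶ X ⊞ P) ((biprod.snd : X ⊞ P ⟶ P) b)) = _
  rw [map_add, e1, e2]

private lemma biprod_total_apply' {Λ : Type u} [Ring Λ] {X P : ModuleCat.{u} Λ}
    (b : ↥(X ⊞ P)) :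
    (biprod.inl : X ⟶ X ⊞ P) ((biprod.fst : X ⊞ P ⟶ X) b)
      + (biprod.inr : P ⟶ X ⊞ P) ((biprod.snd : X ⊞ P ⟶ P) b) = b := by
  have h := hom_congr' (biprod.total (X := X) (Y := P)) b
  exact h

end Helpers

/-- If `C` has enough `C`-projectives, then `F(C)` is covariantly finite in
`H(C)`: for `f : X ⟶ Y` with `X, Y ∈ C` there are a `C`-projective `P` and a deflation
`p : P ⟶ Y` such that `(f,p) : X ⊞ P ⟶ Y` lies in `F(C)` and `((1,0)ᵗ, 𝟙_Y) : f → (f,p)` is a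
left `F(C)`-approximation. -/
theorem fepi_covariantly_finite_in_hmor
    (k : Type u) [Field k] (Λ : Type u) [Ring Λ] [Algebra k Λ] [FiniteDimensional k Λ]
    (C : Set (ModuleCat.{u} Λ))
    (hCfd : ∀ M ∈ C, Module.Finite Λ M)
    (hC0 : ContainsZero C) (hCiso : ClosedUnderIso C)
    (hCsum : ClosedUnderSums C) (hCext : ClosedUnderExtensions C)
    (hCproj : EnoughCProjectives C)
    (X Y : ModuleCat.{u} Λ) (hX : X ∈ C) (hY : Y ∈ C) (f : X ⟶ Y) :
    ∃ (P : ModuleCat.{u} Λ), CProjective C P ∧ ∃ p : P ⟶ Y, IsDeflation C p ∧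
      IsDeflation C (biprod.desc f p) ∧
      ∀ (M N : ModuleCat.{u} Λ) (h : M ⟶ N), IsDeflation C h →
        ∀ (α : X ⟶ M) (β : Y ⟶ N), f ≫ β = α ≫ h →
          ∃ γ : (X ⊞ P : ModuleCat.{u} Λ) ⟶ M,
            γ ≫ h = biprod.desc f p ≫ β ∧ biprod.inl ≫ γ = α := by
  obtain ⟨P, X', hPproj, hX', q, p, hqp⟩ := hCproj Y hY
  obtain ⟨hqinj, hpsurj, hqpex⟩ := hqp
  have hP : P ∈ C := hPproj.1
  set d : (X ⊞ P : ModuleCat.{u} Λ) ⟶ Y := biprod.desc f p with hd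
  -- elementwise biprod lemmas
  have einl_fst : ∀ x : X, (biprod.fst : X ⊞ P ⟶ X) ((biprod.inl : X ⟶ X ⊞ P) x) = x :=
    fun x => hom_congr' biprod.inl_fst x
  have einr_fst : ∀ r : P, (biprod.fst : X ⊞ P ⟶ X) ((biprod.inr : P ⟶ X ⊞ P) r) = 0 :=
    fun r => hom_congr' biprod.inr_fst r
  have einl_snd : ∀ x : X, (biprod.snd : X ⊞ P ⟶ P) ((biprod.inl : X ⟶ X ⊞ P) x) = 0 :=
    fun x => hom_congr' biprod.inl_snd x
  have einr_snd : ∀ r : P, (biprod.snd : X ⊞ P ⟶ P) ((biprod.inr : P ⟶ X ⊞ P) r) = r :=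
    fun r => hom_congr' biprod.inr_snd r
  -- surjectivity of d
  have hdsurj : Function.Surjective d := by
    intro y
    obtain ⟨r, hr⟩ := hpsurj y
    refine ⟨(biprod.inr : P ⟶ X ⊞ P) r, ?_⟩
    rw [hd, biprod_desc_apply', einr_fst, einr_snd, map_zero, zero_add, hr]
  -- the kernel of d
  set Kmod : Submodule Λ ↥(X ⊞ P) := LinearMap.ker (d.hom : ↥(X ⊞ P) →ₗ[Λ] ↥Y) with hKmod
  set K : ModuleCat.{u} Λ := ModuleCat.of Λ ↥Kmod with hK
  set g : K ⟶ (X ⊞ P : ModuleCat.{u} Λ) := ModuleCat.ofHom Kmod.subtype with hg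
  -- K ∈ C via the SES X' → K → X
  have hjmem : ∀ x' : X', (q ≫ (biprod.inr : P ⟶ X ⊞ P)) x' ∈ Kmod := by
    intro x'
    have : d ((biprod.inr : P ⟶ X ⊞ P) (q x')) = 0 := by
      rw [hd, biprod_desc_apply', einr_fst, einr_snd, map_zero, zero_add]
      exact hqpex.apply_apply_eq_zero x'
    exact LinearMap.mem_ker.mpr this
  set j : X' ⟶ K := ModuleCat.ofHom (LinearMap.codRestrict Kmod (q ≫ (biprod.inr : P ⟶ X ⊞ P)).hom hjmem) with hj
  set π : K ⟶ X := ModuleCat.ofHom ((biprod.fst : X ⊞ P ⟶ X).hom.comp Kmod.subtype) with hπ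
  have hjval : ∀ x' : X', Kmod.subtype (j x') = (biprod.inr : P ⟶ X ⊞ P) (q x') :=
    fun _ => rfl
  have hπval : ∀ z : K, π z = (biprod.fst : X ⊞ P ⟶ X) (Kmod.subtype z) := fun _ => rfl
  have hsesK : ShortExactSeq j π := by
    refine ⟨?_, ?_, ?_⟩
    · intro a b hab
      have h1 : (biprod.inr : P ⟶ X ⊞ P) (q a) = (biprod.inr : P ⟶ X ⊞ P) (q b) := by
        rw [← hjval, ← hjval, hab]
      have h2 : q a = q b := by
        have := congrArg (biprod.snd : X ⊞ P ⟶ P) h1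
        rwa [einr_snd, einr_snd] at this
      exact hqinj h2
    · intro x
      obtain ⟨r, hr⟩ := hpsurj (f x)
      have hmem : (biprod.inl : X ⟶ X ⊞ P) x - (biprod.inr : P ⟶ X ⊞ P) r ∈ Kmod := by
        apply LinearMap.mem_ker.mpr
        show d _ = 0
        rw [hd, map_sub, biprod_desc_apply', biprod_desc_apply',
          einl_fst, einl_snd, einr_fst, einr_snd, map_zero, map_zero, add_zero, zero_add, hr,
          sub_self]
      refine ⟨⟨_, hmem⟩, ?_⟩
      show (biprod.fst : X ⊞ P ⟶ X) ((biprod.inl : X ⟶ X ⊞ P) x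
          - (biprod.inr : P ⟶ X ⊞ P) r) = x
      rw [map_sub, einl_fst, einr_fst, sub_zero]
    · intro z
      constructor
      · intro hz
        have hzfst : (biprod.fst : X ⊞ P ⟶ X) (Kmod.subtype z) = 0 := hz
        have hzval : (biprod.inr : P ⟶ X ⊞ P) ((biprod.snd : X ⊞ P ⟶ P) (Kmod.subtype z))
            = Kmod.subtype z := by
          have := biprod_total_apply' (Kmod.subtype z)
          rwa [hzfst, map_zero, zero_add] at this
        have hdz : d (Kmod.subtype z) = 0 :=
          LinearMap.mem_ker.mp (SetLike.coe_mem (p := Kmod) z)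
        have hpz : p ((biprod.snd : X ⊞ P ⟶ P) (Kmod.subtype z)) = 0 := by
          rw [hd, biprod_desc_apply', hzfst, map_zero, zero_add] at hdz
          exact hdz
        obtain ⟨x', hx'⟩ := (hqpex _).mp hpz
        refine ⟨x', ?_⟩
        show (⟨Kmod.subtype (j x'), SetLike.coe_mem _⟩ : ↥Kmod) = z
        apply Subtype.ext
        show Kmod.subtype (j x') = Kmod.subtype z
        rw [hjval, hx', hzval]
      · rintro ⟨x', rfl⟩
        show (biprod.fst : X ⊞ P ⟶ X) (Kmod.subtype (j x')) = 0
        rw [hjval, einr_fst]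
  have hKC : K ∈ C := hCext X' K X j π hX' hX hsesK
  have hsesD : ShortExactSeq g d := by
    refine ⟨?_, hdsurj, ?_⟩
    · intro a b hab
      exact Subtype.ext hab
    · intro b
      constructor
      · intro hb
        exact ⟨⟨b, LinearMap.mem_ker.mpr hb⟩, rfl⟩
      · rintro ⟨z, rfl⟩
        exact LinearMap.mem_ker.mp (SetLike.coe_mem (p := Kmod) z)
  refine ⟨P, hPproj, p, ⟨hP, hY, hpsurj, X', hX', q, hqinj, hpsurj, hqpex⟩,
    ⟨hCsum X P hX hP, hY, hdsurj, K, hKC, g, hsesD⟩, ?_⟩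
  -- the approximation property
  intro M N h hdef α β hcomm
  obtain ⟨hM, hN, hhsurj, Z, hZ, gM, hgminj, hhsurj', hgmex⟩ := hdef
  -- the pullback E of h along β ∘ p
  set φ : (↥M × ↥P) →ₗ[Λ] ↥N :=
    (h.hom : ↥M →ₗ[Λ] ↥N).comp (LinearMap.fst Λ ↥M ↥P)
      - ((p ≫ β : P ⟶ N).hom : ↥P →ₗ[Λ] ↥N).comp (LinearMap.snd Λ ↥M ↥P) with hφ
  set Emod : Submodule Λ (↥M × ↥P) := LinearMap.ker φ with hEmod
  set E : ModuleCat.{u} Λ := ModuleCat.of Λ ↥Emod with hE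
  have hmemE : ∀ v : ↥M × ↥P, v ∈ Emod ↔ h v.1 = β (p v.2) := by
    intro v
    rw [hEmod, LinearMap.mem_ker, hφ, LinearMap.sub_apply, LinearMap.comp_apply,
      LinearMap.comp_apply, sub_eq_zero]
    rfl
  set πE : E ⟶ P := ModuleCat.ofHom ((LinearMap.snd Λ ↥M ↥P).comp Emod.subtype) with hπE
  have hjEmem : ∀ z : Z, ((gM z : ↥M), (0 : ↥P)) ∈ Emod := by
    intro z
    rw [hmemE]
    show h (gM z) = β (p 0)
    rw [map_zero, map_zero, hgmex.apply_apply_eq_zero z]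
  set jE : Z ⟶ E := ModuleCat.ofHom (LinearMap.codRestrict Emod
    ((LinearMap.inl Λ ↥M ↥P).comp (gM.hom : ↥Z →ₗ[Λ] ↥M)) hjEmem) with hjE
  have hjEval : ∀ z : Z, Emod.subtype (jE z) = ((gM z : ↥M), (0 : ↥P)) := fun _ => rfl
  have hπEval : ∀ e : E, πE e = (Emod.subtype e).2 := fun _ => rfl
  have hsesE : ShortExactSeq jE πE := by
    refine ⟨?_, ?_, ?_⟩
    · intro a b hab
      have h1 : Emod.subtype (jE a) = Emod.subtype (jE b) := by rw [hab]
      rw [hjEval, hjEval] at h1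
      exact hgminj (congrArg Prod.fst h1)
    · intro r
      obtain ⟨m, hm⟩ := hhsurj (β (p r))
      exact ⟨⟨(m, r), (hmemE (m, r)).mpr hm⟩, rfl⟩
    · intro e
      constructor
      · intro he
        have he2 : (Emod.subtype e).2 = 0 := he
        have hm0 : h (Emod.subtype e).1 = 0 := by
          have := (hmemE (Emod.subtype e)).mp (SetLike.coe_mem (p := Emod) e)
          rwa [he2, map_zero, map_zero] at this
        obtain ⟨z, hz⟩ := (hgmex _).mp hm0
        refine ⟨z, ?_⟩
        show (⟨Emod.subtype (jE z), SetLike.coe_mem _⟩ : ↥Emod) = e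
        apply Subtype.ext
        show Emod.subtype (jE z) = Emod.subtype e
        rw [hjEval, hz, ← he2]
      · rintro ⟨z, rfl⟩
        show (Emod.subtype (jE z)).2 = 0
        rw [hjEval]
  have hEC : E ∈ C := hCext Z E P jE πE hZ hP hsesE
  obtain ⟨s, hs⟩ := hPproj.2 Z E hZ hEC jE πE hsesE
  set l : P ⟶ M := ModuleCat.ofHom (((LinearMap.fst Λ ↥M ↥P).comp Emod.subtype).comp (s.hom : ↥P →ₗ[Λ] ↥E))
    with hl
  have hlval : ∀ r : P, l r = (Emod.subtype (s r)).1 := fun _ => rfl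
  have hkey : ∀ r : P, h (l r) = β (p r) := by
    intro r
    have hsr : (Emod.subtype (s r)).2 = r := hom_congr' hs r
    have hmem := (hmemE (Emod.subtype (s r))).mp (SetLike.coe_mem (p := Emod) (s r))
    rw [hsr] at hmem
    rw [hlval]
    exact hmem
  refine ⟨biprod.desc α l, ?_, biprod.inl_desc α l⟩
  apply biprod.hom_ext'
  · rw [biprod.inl_desc_assoc, biprod.inl_desc_assoc, hcomm]
  · rw [biprod.inr_desc_assoc, biprod.inr_desc_assoc]
    exact ModuleCat.hom_ext (LinearMap.ext fun r => hkey r)
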